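/- arXiv:1906.08618 — 2 statements merged into one kernel-verified Lean document; each statement's English description precedes it below -/
import Mathlib

section
/- If x : ℝ → V is a C¹ curve in a finite-dimensional inner product space satisfying dx/ds = x(s) − b(s) with ‖b(s)‖ ≤ C for all s, and ‖x(s)‖ is bounded on ℝ, then ‖x(s)‖ ≤ C for all s ∈ ℝ. -/
/- If x : ℝ → V solves dx/ds = x − b(s) with ‖b(s)‖ ≤ C, and ‖x(s)‖ is bounded
on ℝ, then ‖x(s)‖ ≤ C for all s. -/

theorem bounded_solution_of_linear_ode_confined
    {V : Type*} [NormedAddCommGroup V] [InnerProductSpace ℝ V]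
    [FiniteDimensional ℝ V]
    (C : ℝ) (hC : 0 ≤ C) (b : ℝ → V) (hb : Continuous b) (hbC : ∀ s, ‖b s‖ ≤ C)
    (x : ℝ → V) (hx : ∀ s, HasDerivAt x (x s - b s) s)
    (hbd : ∃ B : ℝ, ∀ s, ‖x s‖ ≤ B) :
    ∀ s, ‖x s‖ ≤ C := by
  obtain ⟨B, hB⟩ := hbd
  intro s₀
  by_contra h
  push_neg at h
  set y : ℝ → V := fun t => Real.exp (-t) • x t with hy_def
  have hexp : ∀ t : ℝ, HasDerivAt (fun u : ℝ => Real.exp (-u)) (-Real.exp (-t)) t := by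
    intro t
    simpa [Function.comp_def] using ((Real.hasDerivAt_exp (-t)).comp t ((hasDerivAt_id t).neg))
  have hy : ∀ t, HasDerivAt y (-(Real.exp (-t) • b t)) t := by
    intro t
    have := (hexp t).smul (hx t)
    convert this using 1
    · rfl
    simp [smul_sub, neg_smul, sub_eq_add_neg]
  set δ : ℝ := Real.exp (-s₀) * (‖x s₀‖ - C) with hδ_def
  have hδpos : 0 < δ := mul_pos (Real.exp_pos _) (by linarith)
  have key : ∀ s, s₀ ≤ s → δ ≤ Real.exp (-s) * ‖x s‖ := by
    intro s hs
    have hcont : Continuous fun t : ℝ => -(Real.exp (-t) • b t) := by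
      continuity
    have hint : (∫ t in s₀..s, -(Real.exp (-t) • b t)) = y s - y s₀ :=
      intervalIntegral.integral_eq_sub_of_hasDerivAt (fun t _ => hy t)
        (hcont.intervalIntegrable _ _)
    have hExpInt : (∫ t in s₀..s, Real.exp (-t)) = Real.exp (-s₀) - Real.exp (-s) := by
      have := intervalIntegral.integral_eq_sub_of_hasDerivAt
        (f := fun u : ℝ => -Real.exp (-u)) (f' := fun u : ℝ => Real.exp (-u))
        (a := s₀) (b := s)
        (fun t _ => by simpa using (hexp t).fun_neg)
        ((Real.continuous_exp.comp continuous_neg).intervalIntegrable _ _)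
      rw [this]; ring
    have hnorm : ‖y s - y s₀‖ ≤ C * (Real.exp (-s₀) - Real.exp (-s)) := by
      rw [← hint]
      calc ‖∫ t in s₀..s, -(Real.exp (-t) • b t)‖
          ≤ ∫ t in s₀..s, ‖-(Real.exp (-t) • b t)‖ :=
            intervalIntegral.norm_integral_le_integral_norm hs
        _ ≤ ∫ t in s₀..s, Real.exp (-t) * C := by
            apply intervalIntegral.integral_mono_on hs
              ((hcont.norm).intervalIntegrable _ _)
              (((Real.continuous_exp.comp continuous_neg).mul continuous_const).intervalIntegrable _ _)
            intro t _
            rw [norm_neg, norm_smul, Real.norm_eq_abs, abs_of_pos (Real.exp_pos _)]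
            exact mul_le_mul_of_nonneg_left (hbC t) (Real.exp_pos _).le
        _ = C * (Real.exp (-s₀) - Real.exp (-s)) := by
            rw [intervalIntegral.integral_mul_const, hExpInt]; ring
    have h1 : ‖y s₀‖ - ‖y s‖ ≤ ‖y s - y s₀‖ := by
      have := norm_sub_norm_le (y s₀) (y s)
      rw [norm_sub_rev] at this
      linarith
    have h2 : ‖y s₀‖ = Real.exp (-s₀) * ‖x s₀‖ := by
      rw [hy_def]
      simp [norm_smul, Real.norm_eq_abs, abs_of_pos (Real.exp_pos _)]
    have h3 : ‖y s‖ = Real.exp (-s) * ‖x s‖ := by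
      rw [hy_def]
      simp [norm_smul, Real.norm_eq_abs, abs_of_pos (Real.exp_pos _)]
    have h4 : 0 ≤ C * Real.exp (-s) := mul_nonneg hC (Real.exp_pos _).le
    rw [h2, h3] at h1
    nlinarith [hnorm, h1, h4, Real.exp_pos (-s), Real.exp_pos (-s₀)]
  -- pick s large with exp(-s) * B < δ
  have htend : Filter.Tendsto (fun s : ℝ => Real.exp (-s) * B) Filter.atTop (nhds 0) := by
    simpa using Real.tendsto_exp_neg_atTop_nhds_zero.mul_const B
  have hev : ∀ᶠ s in Filter.atTop, Real.exp (-s) * B < δ :=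
    htend.eventually_lt_const hδpos
  obtain ⟨s, hs₀, hslt⟩ := ((Filter.eventually_ge_atTop s₀).and hev).exists
  have h5 := key s hs₀
  have h6 : Real.exp (-s) * ‖x s‖ ≤ Real.exp (-s) * B :=
    mul_le_mul_of_nonneg_left (hB s) (Real.exp_pos _).le
  linarith
end

section
/- Let f : E → ℝ be a smooth function on a Hilbert space, E = Z ⊕ Y an orthogonal splitting with projection P onto Z, and suppose φ : Z → Y is a smooth map with (1−P)∇f(z + φ(z)) = 0 for all z ∈ Z. Define g : Z → ℝ by g(z) = f(z + φ(z)). Then ∇g(z) = P∇f(z + φ(z)); in particular z is a critical point of g if and only if z + φ(z) is a critical point of f. -/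
/- Amann's saddle point reduction: E = Z ⊕ Y with Y = Zᗮ, P the orthogonal
projection onto Z, f : E → ℝ of class C¹, and φ : Z → Y a C¹ map with
(1−P)∇f(z+φ(z)) = 0 for all z. For g(z) = f(z + φ(z)) one has
∇g(z) = P∇f(z+φ(z)); in particular z is a critical point of g iff z + φ(z)
is a critical point of f. -/

theorem saddle_point_reduction_gradient
    {E : Type*} [NormedAddCommGroup E] [InnerProductSpace ℝ E] [CompleteSpace E]
    (Z : Submodule ℝ E) [CompleteSpace Z]
    (f : E → ℝ) (hf : ContDiff ℝ 1 f)
    (φ : Z → Zᗮ) (hφ : ContDiff ℝ 1 φ)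
    (hsolve : ∀ z : Z, Submodule.orthogonalProjectionOnto Zᗮ (gradient f (↑z + ↑(φ z))) = 0) :
    let g : Z → ℝ := fun z => f (↑z + ↑(φ z))
    (∀ z : Z, gradient g z = Submodule.orthogonalProjectionOnto Z (gradient f (↑z + ↑(φ z)))) ∧
    (∀ z : Z, gradient g z = 0 ↔ gradient f (↑z + ↑(φ z)) = 0) := by
  intro g
  -- the gradient of f at the reduced point lies in Z
  have hvZ : ∀ z : Z, gradient f (↑z + ↑(φ z)) ∈ Z := by
    intro z
    have hsum := Submodule.starProjection_add_starProjection_orthogonal (K := Z)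
      (gradient f (↑z + ↑(φ z)))
    rw [Submodule.starProjection_apply, Submodule.starProjection_apply, hsolve z] at hsum
    simp only [ZeroMemClass.coe_zero, add_zero] at hsum
    exact hsum ▸ Submodule.coe_mem _
  have key : ∀ z : Z, HasGradientAt g
      ((Submodule.orthogonalProjectionOnto Z) (gradient f (↑z + ↑(φ z)))) z := by
    intro z
    set x : E := ↑z + ↑(φ z) with hx
    have hfd : DifferentiableAt ℝ f x := (hf.differentiable one_ne_zero) x
    have hφd : DifferentiableAt ℝ φ z := (hφ.differentiable one_ne_zero) z
    have hh : HasFDerivAt (fun w : Z => (↑w + ↑(φ w) : E))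
        (Z.subtypeL + (Zᗮ.subtypeL).comp (fderiv ℝ φ z)) z :=
      (Z.subtypeL.hasFDerivAt).add ((Zᗮ.subtypeL.hasFDerivAt).comp z hφd.hasFDerivAt)
    have hg : HasFDerivAt g
        ((fderiv ℝ f x).comp (Z.subtypeL + (Zᗮ.subtypeL).comp (fderiv ℝ φ z))) z :=
      hfd.hasFDerivAt.comp z hh
    have hfderiv : fderiv ℝ f x = (InnerProductSpace.toDual ℝ E) (gradient f x) :=
      hfd.hasGradientAt.hasFDerivAt.fderiv
    rw [hasGradientAt_iff_hasFDerivAt]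
    refine hg.congr_fderiv ?_
    ext w
    have h1 : ((↑(Submodule.orthogonalProjectionOnto Z (gradient f x)) : E)) = gradient f x :=
      Submodule.starProjection_eq_self_iff.mpr (hvZ z)
    have h2 : inner ℝ (gradient f x) ((fderiv ℝ φ z w : Zᗮ) : E) = (0 : ℝ) :=
      Submodule.inner_right_of_mem_orthogonal (hvZ z) (fderiv ℝ φ z w).2
    simp only [InnerProductSpace.toDual_apply_apply, ContinuousLinearMap.coe_comp',
      Function.comp_apply, ContinuousLinearMap.add_apply, hfderiv,
      Submodule.coe_subtypeL', Submodule.coe_subtype]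
    rw [inner_add_right, h2, add_zero, Submodule.coe_inner, h1]
  refine ⟨fun z => (key z).gradient, fun z => ?_⟩
  rw [(key z).gradient]
  constructor
  · intro h
    have h1 : ((↑(Submodule.orthogonalProjectionOnto Z (gradient f (↑z + ↑(φ z)))) : E))
        = gradient f (↑z + ↑(φ z)) := Submodule.starProjection_eq_self_iff.mpr (hvZ z)
    rw [← h1, h, Submodule.coe_zero]
  · intro h
    rw [h]
    simp
end
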